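/- The idealized Mallows statistic M_S⁰ = rss(S)/σ² − n + 2|S| satisfies E M_S⁰ = |S| + γ_S, where γ_S = n β_{Sc}ᵀ Q_S⁻¹ β_{Sc}/σ² and Q_S⁻¹ = Σ11,S − Σ10,SΣ00,S⁻¹Σ01,S is the Schur complement. -/

import Mathlib

open Matrix MeasureTheory


theorem int_mul_L2 {Ω : Type*} [MeasureSpace Ω] (P : Measure Ω) {f g : Ω → ℝ}
    (hf : MemLp f 2 P) (hg : MemLp g 2 P) : Integrable (fun ω => f ω * g ω) P := by
  have h := hf.smul (φ := g) hg (p := 2) (q := 2) (r := 1)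
    (hpqr := ⟨by rw [ENNReal.inv_two_add_inv_two, inv_one]⟩)
  rw [memLp_one_iff_integrable] at h
  exact h.congr (Filter.Eventually.of_forall fun ω => mul_comm (g ω) (f ω))

theorem dot_shift {n a : ℕ} (M : Matrix (Fin n) (Fin a) ℝ) (x : Fin a → ℝ) (v : Fin n → ℝ) :
    M.mulVec x ⬝ᵥ v = x ⬝ᵥ Mᵀ.mulVec v := by
  simp only [dotProduct, mulVec, transpose_apply, Finset.sum_mul, Finset.mul_sum]
  rw [Finset.sum_comm]
  exact Finset.sum_congr rfl fun i _ => Finset.sum_congr rfl fun j _ => by ring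


/-- The idealized Mallows statistic `M_S⁰ = rss(S)/σ² − n + 2|S|` satisfies
`E M_S⁰ = |S| + γ_S` with `γ_S = n β_{Sc}ᵀ Q_S⁻¹ β_{Sc}/σ²`, where
`Q_S⁻¹ = S11 − S10 S00⁻¹ S01` is the Schur complement in `Σ_n = n⁻¹ XᵀX`. -/
theorem mean_idealized_mallows
    {Ω : Type*} [MeasureSpace Ω] (P : Measure Ω) [IsProbabilityMeasure P]
    (n k l : ℕ) (hn : 0 < n) (hk : k ≤ n)
    (XS : Matrix (Fin n) (Fin k) ℝ) (hU : IsUnit (XSᵀ * XS).det)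
    (XSc : Matrix (Fin n) (Fin l) ℝ)
    (βS : Fin k → ℝ) (βSc : Fin l → ℝ)
    (σ : ℝ) (hσ : 0 < σ)
    (ε : Fin n → Ω → ℝ)
    (hL2 : ∀ i, MemLp (ε i) 2 P)
    (hmean : ∀ i, ∫ ω, ε i ω ∂P = 0)
    (hcov : ∀ i j, ∫ ω, ε i ω * ε j ω ∂P = if i = j then σ ^ 2 else 0)
    (y : Ω → Fin n → ℝ)
    (hy : ∀ ω i, y ω i = (XS.mulVec βS + XSc.mulVec βSc) i + ε i ω)
    (HS : Matrix (Fin n) (Fin n) ℝ)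
    (hH : HS = XS * (XSᵀ * XS)⁻¹ * XSᵀ)
    (rss : Ω → ℝ) (hrss : ∀ ω, rss ω = y ω ⬝ᵥ (1 - HS).mulVec (y ω))
    (S00 : Matrix (Fin k) (Fin k) ℝ) (hS00 : S00 = (n : ℝ)⁻¹ • (XSᵀ * XS))
    (S01 : Matrix (Fin k) (Fin l) ℝ) (hS01 : S01 = (n : ℝ)⁻¹ • (XSᵀ * XSc))
    (S10 : Matrix (Fin l) (Fin k) ℝ) (hS10 : S10 = S01ᵀ)
    (S11 : Matrix (Fin l) (Fin l) ℝ) (hS11 : S11 = (n : ℝ)⁻¹ • (XScᵀ * XSc))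
    (QS : Matrix (Fin l) (Fin l) ℝ) (hQS : QS = (S11 - S10 * S00⁻¹ * S01)⁻¹)
    (hschurU : IsUnit (S11 - S10 * S00⁻¹ * S01).det)
    (M0 : Ω → ℝ) (hM0 : ∀ ω, M0 ω = rss ω / σ ^ 2 - n + 2 * k)
    (γS : ℝ) (hγS : γS = n * (βSc ⬝ᵥ QS⁻¹.mulVec βSc) / σ ^ 2) :
    ∫ ω, M0 ω ∂P = k + γS := by
  have hn0 : (n : ℝ) ≠ 0 := Nat.cast_ne_zero.mpr hn.ne'
  have hσ0 : σ ^ 2 ≠ 0 := pow_ne_zero 2 hσ.ne'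
  set b : Fin n → ℝ := XS.mulVec βS + XSc.mulVec βSc with hb
  set A : Matrix (Fin n) (Fin n) ℝ := 1 - HS with hA
  -- L2 membership of y coordinates
  have hyL2 : ∀ i, MemLp (fun ω => y ω i) 2 P := by
    intro i
    have : (fun ω => y ω i) = fun ω => b i + ε i ω := by funext ω; exact hy ω i
    rw [this]
    exact (memLp_const (b i)).add (hL2 i)
  have hεint : ∀ i, Integrable (ε i) P := fun i => (hL2 i).integrable one_le_two
  have hεε : ∀ i j, Integrable (fun ω => ε i ω * ε j ω) P := fun i j =>
    int_mul_L2 P (hL2 i) (hL2 j)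
  have hint : ∀ i j, Integrable (fun ω => y ω i * y ω j) P := fun i j =>
    int_mul_L2 P (hyL2 i) (hyL2 j)
  -- value of second moments
  have hval : ∀ i j, ∫ ω, y ω i * y ω j ∂P = b i * b j + (if i = j then σ ^ 2 else 0) := by
    intro i j
    have h1 : (fun ω => y ω i * y ω j)
        = fun ω => b i * b j + (b i * ε j ω + (b j * ε i ω + ε i ω * ε j ω)) := by
      funext ω; rw [hy ω i, hy ω j]; ring
    have hI1 : Integrable (fun ω => b i * ε j ω) P := (hεint j).const_mul _
    have hI2 : Integrable (fun ω => b j * ε i ω) P := (hεint i).const_mul _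
    have hI3 : Integrable (fun ω => b j * ε i ω + ε i ω * ε j ω) P := hI2.add (hεε i j)
    have hI4 : Integrable (fun ω => b i * ε j ω + (b j * ε i ω + ε i ω * ε j ω)) P :=
      hI1.add hI3
    rw [h1, integral_add (integrable_const _) hI4, integral_add hI1 hI3,
      integral_add hI2 (hεε i j)]
    simp [integral_const_mul, hmean, hcov i j]
  -- rss as a double sum
  have hrss' : ∀ ω, rss ω = ∑ i, ∑ j, A i j * (y ω i * y ω j) := by
    intro ω
    rw [hrss ω]
    simp only [dotProduct, mulVec, Finset.mul_sum]
    exact Finset.sum_congr rfl fun i _ => Finset.sum_congr rfl fun j _ => by ring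
  have hrssint : Integrable rss P := by
    have : rss = fun ω => ∑ i, ∑ j, A i j * (y ω i * y ω j) := funext hrss'
    rw [this]
    exact integrable_finset_sum _ fun i _ =>
      integrable_finset_sum _ fun j _ => (hint i j).const_mul _
  -- expected rss
  have hErss : ∫ ω, rss ω ∂P
      = ∑ i, ∑ j, A i j * (b i * b j + (if i = j then σ ^ 2 else 0)) := by
    rw [integral_congr_ae (Filter.Eventually.of_forall hrss')]
    refine (integral_finset_sum _ fun i _ =>
        integrable_finset_sum _ fun j _ => (hint i j).const_mul _).trans ?_
    refine Finset.sum_congr rfl fun i _ => ?_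
    refine (integral_finset_sum _ fun j _ => (hint i j).const_mul _).trans ?_
    refine Finset.sum_congr rfl fun j _ => ?_
    rw [integral_const_mul, hval i j]
  -- split double sum
  have hsplit : ∑ i, ∑ j, A i j * (b i * b j + (if i = j then σ ^ 2 else 0))
      = b ⬝ᵥ A.mulVec b + σ ^ 2 * A.trace := by
    have h1 : ∀ i j : Fin n, A i j * (b i * b j + (if i = j then σ ^ 2 else 0))
        = A i j * (b i * b j) + (if i = j then A i j * σ ^ 2 else 0) := by
      intro i j; by_cases h : i = j <;> simp [h] <;> ring
    simp only [h1, Finset.sum_add_distrib]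
    congr 1
    · simp only [dotProduct, mulVec, Finset.mul_sum]
      exact Finset.sum_congr rfl fun i _ => Finset.sum_congr rfl fun j _ => by ring
    · rw [Matrix.trace, Finset.mul_sum]
      refine Finset.sum_congr rfl fun i _ => ?_
      rw [Finset.sum_ite_eq Finset.univ i (fun j => A i j * σ ^ 2)]
      simp [diag, mul_comm]
  -- trace of A
  have htrH : HS.trace = (k : ℝ) := by
    rw [hH, Matrix.mul_assoc, Matrix.trace_mul_comm, Matrix.mul_assoc,
      Matrix.nonsing_inv_mul _ hU, Matrix.trace_one]
    simp
  have htr : A.trace = (n : ℝ) - (k : ℝ) := by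
    rw [hA, trace_sub, trace_one, htrH]
    simp
  -- annihilation identities
  have hAX : A * XS = 0 := by
    rw [hA, hH, Matrix.sub_mul, Matrix.one_mul,
      Matrix.mul_assoc (XS * (XSᵀ * XS)⁻¹) XSᵀ XS,
      Matrix.mul_assoc XS (XSᵀ * XS)⁻¹ (XSᵀ * XS),
      Matrix.nonsing_inv_mul _ hU, Matrix.mul_one, sub_self]
  have hXA : XSᵀ * A = 0 := by
    rw [hA, hH, Matrix.mul_sub, Matrix.mul_one, ← Matrix.mul_assoc, ← Matrix.mul_assoc,
      Matrix.mul_nonsing_inv _ hU, Matrix.one_mul, sub_self]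
  -- Schur complement identity
  have hQinv : QS⁻¹ = S11 - S10 * S00⁻¹ * S01 := by
    rw [hQS, Matrix.nonsing_inv_nonsing_inv _ hschurU]
  have hS00inv : S00⁻¹ = (n : ℝ) • (XSᵀ * XS)⁻¹ := by
    apply Matrix.inv_eq_right_inv
    rw [hS00, Matrix.smul_mul, Matrix.mul_smul, smul_smul,
      Matrix.mul_nonsing_inv _ hU, inv_mul_cancel₀ hn0, one_smul]
  have h2 : QS⁻¹ = (n : ℝ)⁻¹ • (XScᵀ * A * XSc) := by
    rw [hQinv, hS11, hS10, hS01, hS00inv]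
    rw [hA, hH, Matrix.mul_sub, Matrix.mul_one, Matrix.sub_mul, smul_sub]
    congr 1
    simp only [Matrix.transpose_smul, Matrix.transpose_mul, Matrix.transpose_transpose,
      Matrix.smul_mul, Matrix.mul_smul, smul_smul]
    rw [mul_inv_cancel₀ hn0, mul_one]
    simp only [Matrix.mul_assoc]
  have hkey : XScᵀ * A * XSc = (n : ℝ) • QS⁻¹ := by
    rw [h2, smul_smul, mul_inv_cancel₀ hn0, one_smul]
  -- quadratic form
  have hquad : b ⬝ᵥ A.mulVec b = (n : ℝ) * (βSc ⬝ᵥ QS⁻¹.mulVec βSc) := by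
    have hzero : A.mulVec (XS.mulVec βS) = 0 := by
      rw [Matrix.mulVec_mulVec, hAX, Matrix.zero_mulVec]
    have hT2 : XS.mulVec βS ⬝ᵥ A.mulVec (XSc.mulVec βSc) = 0 := by
      rw [dot_shift, Matrix.mulVec_mulVec, Matrix.mulVec_mulVec,
        hXA, Matrix.zero_mul, Matrix.zero_mulVec, dotProduct_zero]
    have hT4 : XSc.mulVec βSc ⬝ᵥ A.mulVec (XSc.mulVec βSc)
        = (n : ℝ) * (βSc ⬝ᵥ QS⁻¹.mulVec βSc) := by
      rw [dot_shift, Matrix.mulVec_mulVec, Matrix.mulVec_mulVec,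
        hkey, Matrix.smul_mulVec, dotProduct_smul, smul_eq_mul]
    rw [hb, Matrix.mulVec_add, add_dotProduct, dotProduct_add, dotProduct_add,
      hzero, dotProduct_zero, dotProduct_zero, hT2, hT4]
    ring
  -- expected M0
  have hM0' : (fun ω => M0 ω) = fun ω => rss ω * (σ ^ 2)⁻¹ + ((2 * k : ℝ) - n) := by
    funext ω; rw [hM0 ω]; ring
  rw [hM0', integral_add (hrssint.mul_const _) (integrable_const _),
    integral_mul_const, integral_const]
  simp only [measure_univ, probReal_univ, ENNReal.toReal_one, smul_eq_mul, one_mul]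
  rw [hErss, hsplit, htr, hquad, hγS]
  field_simp
  ring
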